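/- Hadamard construction: let H be a Hadamard matrix of order 4n (n ≥ 2) whose first row is all +1. Identify the 2n cancer types with the columns where the second row is +1 and the 2n drugs with the columns where the second row is -1. Each of the remaining 4n-2 rows yields two blocks: one consisting of the cancer types and drugs in the columns with entry +1, the other those with entry -1. The resulting 8n-4 blocks form a 2-part 2-design with v1 = v2 = 2n, k1 = k2 = n, λ11 = λ22 = 2n-2, and λ12 = 2n-1. -/
import Mathlib


open Finset

lemma pm_half_card {m : ℕ} (s : Finset (Fin m)) (f : Fin m → ℤ)
    (hf : ∀ x, f x = 1 ∨ f x = -1) (hsum : ∑ x ∈ s, f x = 0) :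
    2 * (s.filter (fun x => f x = 1)).card = s.card ∧
    2 * (s.filter (fun x => f x = -1)).card = s.card := by
  have hcompl : s.filter (fun x => f x = -1) = s.filter (fun x => ¬ f x = 1) := by
    ext x
    simp only [mem_filter]
    constructor
    · rintro ⟨hx, h⟩; exact ⟨hx, by rw [h]; norm_num⟩
    · rintro ⟨hx, h⟩; rcases hf x with h1 | h1 <;> simp_all
  have hadd : (s.filter (fun x => f x = 1)).card + (s.filter (fun x => f x = -1)).card = s.card := by
    rw [hcompl]
    exact Finset.card_filter_add_card_filter_not _
  have hs1 : ∑ x ∈ s.filter (fun x => f x = 1), f x = ((s.filter (fun x => f x = 1)).card : ℤ) := by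
    rw [Finset.sum_congr rfl (fun x hx => (mem_filter.mp hx).2)]; simp
  have hs2 : ∑ x ∈ s.filter (fun x => ¬ f x = 1), f x = -((s.filter (fun x => f x = -1)).card : ℤ) := by
    rw [← hcompl, Finset.sum_congr rfl (fun x hx => (mem_filter.mp hx).2)]; simp
  have hsplit := Finset.sum_filter_add_sum_filter_not s (fun x => f x = 1) f
  rw [hs1, hs2, hsum] at hsplit
  omega

lemma row_orth {m : ℕ} (H : Matrix (Fin m) (Fin m) ℤ)
    (hHad : H * H.transpose = (m : ℤ) • 1) {i i' : Fin m} (h : i ≠ i') :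
    ∑ j, H i j * H i' j = 0 := by
  have := congrFun (congrFun hHad i) i'
  simpa [Matrix.mul_apply, Matrix.transpose_apply, Matrix.smul_apply, Matrix.one_apply, h]
    using this

lemma col_orth {m : ℕ} (hm : 0 < m) (H : Matrix (Fin m) (Fin m) ℤ)
    (hHad : H * H.transpose = (m : ℤ) • 1) {j j' : Fin m} (h : j ≠ j') :
    ∑ i, H i j * H i j' = 0 := by
  have hm' : (m : ℚ) ≠ 0 := by exact_mod_cast hm.ne'
  set K : Matrix (Fin m) (Fin m) ℚ := H.map (Int.cast) with hK
  have hKmul : K * K.transpose = (m : ℚ) • 1 := by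
    ext i i'
    have := congrFun (congrFun hHad i) i'
    simp only [Matrix.mul_apply, Matrix.transpose_apply, Matrix.smul_apply, Matrix.one_apply,
      smul_eq_mul] at this ⊢
    have hc : ∑ x, K i x * K i' x = ((∑ x, H i x * H i' x : ℤ) : ℚ) := by
      push_cast
      simp [hK, Matrix.map_apply]
    rw [hc, this]
    push_cast
    ring
  have h1 : K * ((m : ℚ)⁻¹ • K.transpose) = 1 := by
    rw [Matrix.mul_smul, hKmul, smul_smul, inv_mul_cancel₀ hm', one_smul]
  have h2 : ((m : ℚ)⁻¹ • K.transpose) * K = 1 := mul_eq_one_comm.mp h1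
  have h3 : K.transpose * K = (m : ℚ) • 1 := by
    have := congrArg (fun M => (m : ℚ) • M) h2
    simpa [Matrix.smul_mul, smul_smul, mul_inv_cancel₀ hm'] using this
  have h4 := congrFun (congrFun h3 j) j'
  simp only [Matrix.mul_apply, Matrix.transpose_apply, Matrix.smul_apply, Matrix.one_apply,
    h, if_false, smul_zero] at h4
  have h5 : ((∑ i, H i j * H i j' : ℤ) : ℚ) = 0 := by
    push_cast
    simpa [hK, Matrix.map_apply] using h4
  exact_mod_cast h5


/-- Hadamard construction: from a Hadamard matrix of order 4n (n ≥ 2) with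
all-+1 first row, identifying cancer types with the columns where the second
row is +1 and drugs with those where it is -1, each remaining row gives two
complementary blocks; the resulting 8n-4 blocks form a 2-part 2-design with
v1 = v2 = 2n, k1 = k2 = n, λ11 = λ22 = 2n-2 and λ12 = 2n-1. -/
theorem hadamard_two_part
    (n : ℕ) (hn : 2 ≤ n)
    (H : Matrix (Fin (4 * n)) (Fin (4 * n)) ℤ)
    (hpm : ∀ i j, H i j = 1 ∨ H i j = -1)
    (hHad : H * H.transpose = (4 * n : ℤ) • 1)
    (hrow0 : ∀ j, H ⟨0, by omega⟩ j = 1) :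
    -- there are 2n cancer types and 2n drugs
    ((Finset.univ.filter (fun j : Fin (4 * n) => H ⟨1, by omega⟩ j = 1)).card = 2 * n) ∧
    ((Finset.univ.filter (fun j : Fin (4 * n) => H ⟨1, by omega⟩ j = -1)).card = 2 * n) ∧
    -- there are 8n - 4 blocks
    ((Finset.univ.filter (fun t : Fin (4 * n) × Bool =>
        t.1 ≠ ⟨0, by omega⟩ ∧ t.1 ≠ ⟨1, by omega⟩)).card = 8 * n - 4) ∧
    -- each block contains n cancer types and n drugs
    (∀ i : Fin (4 * n), i ≠ ⟨0, by omega⟩ → i ≠ ⟨1, by omega⟩ → ∀ e : Bool,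
      ((Finset.univ.filter (fun j : Fin (4 * n) => H ⟨1, by omega⟩ j = 1)).filter
        (fun j => H i j = (if e then (1 : ℤ) else -1))).card = n ∧
      ((Finset.univ.filter (fun j : Fin (4 * n) => H ⟨1, by omega⟩ j = -1)).filter
        (fun j => H i j = (if e then (1 : ℤ) else -1))).card = n) ∧
    -- each pair of distinct cancer types lies in 2n-2 blocks
    (∀ j j' : Fin (4 * n), H ⟨1, by omega⟩ j = 1 → H ⟨1, by omega⟩ j' = 1 → j ≠ j' →
      (Finset.univ.filter (fun t : Fin (4 * n) × Bool =>
        t.1 ≠ ⟨0, by omega⟩ ∧ t.1 ≠ ⟨1, by omega⟩ ∧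
        H t.1 j = (if t.2 then (1 : ℤ) else -1) ∧
        H t.1 j' = (if t.2 then (1 : ℤ) else -1))).card = 2 * n - 2) ∧
    -- each pair of distinct drugs lies in 2n-2 blocks
    (∀ j j' : Fin (4 * n), H ⟨1, by omega⟩ j = -1 → H ⟨1, by omega⟩ j' = -1 → j ≠ j' →
      (Finset.univ.filter (fun t : Fin (4 * n) × Bool =>
        t.1 ≠ ⟨0, by omega⟩ ∧ t.1 ≠ ⟨1, by omega⟩ ∧
        H t.1 j = (if t.2 then (1 : ℤ) else -1) ∧
        H t.1 j' = (if t.2 then (1 : ℤ) else -1))).card = 2 * n - 2) ∧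
    -- each cancer type occurs with each drug in 2n-1 blocks
    (∀ j j' : Fin (4 * n), H ⟨1, by omega⟩ j = 1 → H ⟨1, by omega⟩ j' = -1 →
      (Finset.univ.filter (fun t : Fin (4 * n) × Bool =>
        t.1 ≠ ⟨0, by omega⟩ ∧ t.1 ≠ ⟨1, by omega⟩ ∧
        H t.1 j = (if t.2 then (1 : ℤ) else -1) ∧
        H t.1 j' = (if t.2 then (1 : ℤ) else -1))).card = 2 * n - 1) := by
  have hm : 0 < 4 * n := by omega
  set r0 : Fin (4 * n) := ⟨0, by omega⟩ with hr0
  set r1 : Fin (4 * n) := ⟨1, by omega⟩ with hr1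
  have hHad' : H * H.transpose = ((4 * n : ℕ) : ℤ) • 1 := by
    rw [hHad]; norm_num
  have h01 : r0 ≠ r1 := by simp [hr0, hr1, Fin.ext_iff]
  -- row sums vanish for rows ≠ r0
  have hrsum : ∀ i : Fin (4 * n), i ≠ r0 → ∑ j, H i j = 0 := by
    intro i hi
    have := row_orth H hHad' hi
    simpa [hrow0] using this
  -- component 1 and 2
  have hcard1 : (univ.filter (fun j : Fin (4 * n) => H r1 j = 1)).card = 2 * n := by
    have := (pm_half_card univ (H r1) (hpm r1) (hrsum r1 h01.symm)).1
    simp only [Finset.card_univ, Fintype.card_fin] at this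
    omega
  have hcard2 : (univ.filter (fun j : Fin (4 * n) => H r1 j = -1)).card = 2 * n := by
    have := (pm_half_card univ (H r1) (hpm r1) (hrsum r1 h01.symm)).2
    simp only [Finset.card_univ, Fintype.card_fin] at this
    omega
  -- component 3
  have hblocks : (univ.filter (fun t : Fin (4 * n) × Bool =>
      t.1 ≠ r0 ∧ t.1 ≠ r1)).card = 8 * n - 4 := by
    have h1 : (univ.filter (fun t : Fin (4 * n) × Bool => t.1 ≠ r0 ∧ t.1 ≠ r1))
        = (univ.filter (fun i : Fin (4 * n) => i ≠ r0 ∧ i ≠ r1)) ×ˢ (univ : Finset Bool) := by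
      ext ⟨i, e⟩
      simp [Finset.mem_product]
    have h2 : (univ.filter (fun i : Fin (4 * n) => i ≠ r0 ∧ i ≠ r1))
        = univ \ {r0, r1} := by
      ext i
      simp [not_or]
    rw [h1, Finset.card_product, h2, Finset.card_sdiff_of_subset (Finset.subset_univ _)]
    rw [Finset.card_pair h01]
    simp only [Finset.card_univ, Fintype.card_fin, Fintype.card_bool]
    omega
  -- component 4
  have hblockcard : ∀ i : Fin (4 * n), i ≠ r0 → i ≠ r1 → ∀ e : Bool,
      ((univ.filter (fun j : Fin (4 * n) => H r1 j = 1)).filter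
        (fun j => H i j = (if e then (1 : ℤ) else -1))).card = n ∧
      ((univ.filter (fun j : Fin (4 * n) => H r1 j = -1)).filter
        (fun j => H i j = (if e then (1 : ℤ) else -1))).card = n := by
    intro i hi0 hi1 e
    have hMeq : (univ.filter (fun j : Fin (4 * n) => H r1 j = -1))
        = (univ.filter (fun j : Fin (4 * n) => ¬ H r1 j = 1)) := by
      ext x
      simp only [mem_filter, mem_univ, true_and]
      constructor
      · intro h; rw [h]; norm_num
      · intro h; rcases hpm r1 x with h1 | h1 <;> simp_all
    have hA := Finset.sum_filter_add_sum_filter_not univ (fun j => H r1 j = 1) (fun j => H i j)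
    have hB := Finset.sum_filter_add_sum_filter_not univ (fun j => H r1 j = 1)
      (fun j => H r1 j * H i j)
    rw [hrsum i hi0] at hA
    have hB0 : ∑ j, H r1 j * H i j = 0 := row_orth H hHad' (Ne.symm hi1)
    rw [hB0] at hB
    have e1 : ∑ j ∈ univ.filter (fun j => H r1 j = 1), H r1 j * H i j
        = ∑ j ∈ univ.filter (fun j => H r1 j = 1), H i j := by
      apply Finset.sum_congr rfl
      intro x hx
      rw [(mem_filter.mp hx).2, one_mul]
    have e2 : ∑ j ∈ univ.filter (fun j => ¬ H r1 j = 1), H r1 j * H i j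
        = -∑ j ∈ univ.filter (fun j => ¬ H r1 j = 1), H i j := by
      rw [← Finset.sum_neg_distrib]
      apply Finset.sum_congr rfl
      intro x hx
      have := (mem_filter.mp hx).2
      rcases hpm r1 x with h1 | h1
      · exact absurd h1 this
      · rw [h1]; ring
    rw [e1, e2] at hB
    have hsumP : ∑ j ∈ univ.filter (fun j => H r1 j = 1), H i j = 0 := by linarith
    have hsumM : ∑ j ∈ univ.filter (fun j => ¬ H r1 j = 1), H i j = 0 := by linarith
    have hsumM' : ∑ j ∈ univ.filter (fun j => H r1 j = -1), H i j = 0 := by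
      rw [hMeq]; exact hsumM
    have hP := pm_half_card (univ.filter (fun j => H r1 j = 1)) (H i) (hpm i) hsumP
    have hM := pm_half_card (univ.filter (fun j => H r1 j = -1)) (H i) (hpm i) hsumM'
    rw [hcard1] at hP
    rw [hcard2] at hM
    cases e
    · simp only [Bool.false_eq_true, if_false]
      exact ⟨by omega, by omega⟩
    · simp only [if_true]
      exact ⟨by omega, by omega⟩
  -- reduction for pair-counting
  have hpairred : ∀ j j' : Fin (4 * n),
      (univ.filter (fun t : Fin (4 * n) × Bool =>
        t.1 ≠ r0 ∧ t.1 ≠ r1 ∧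
        H t.1 j = (if t.2 then (1 : ℤ) else -1) ∧
        H t.1 j' = (if t.2 then (1 : ℤ) else -1))).card
      = (univ.filter (fun i : Fin (4 * n) => i ≠ r0 ∧ i ≠ r1 ∧ H i j = H i j')).card := by
    intro j j'
    have himg : (univ.filter (fun t : Fin (4 * n) × Bool =>
        t.1 ≠ r0 ∧ t.1 ≠ r1 ∧
        H t.1 j = (if t.2 then (1 : ℤ) else -1) ∧
        H t.1 j' = (if t.2 then (1 : ℤ) else -1)))
        = (univ.filter (fun i : Fin (4 * n) => i ≠ r0 ∧ i ≠ r1 ∧ H i j = H i j')).image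
          (fun i => (i, decide (H i j = 1))) := by
      ext ⟨i, e⟩
      simp only [mem_image, mem_filter, mem_univ, true_and, Prod.mk.injEq]
      constructor
      · rintro ⟨h0, h1, hj, hj'⟩
        refine ⟨i, ⟨h0, h1, by rw [hj, hj']⟩, rfl, ?_⟩
        cases e
        · simp only [Bool.false_eq_true, if_false] at hj
          simp [hj]
        · simp only [if_true] at hj
          simp [hj]
      · rintro ⟨a, ⟨h0, h1, heq⟩, rfl, rfl⟩
        refine ⟨h0, h1, ?_, ?_⟩
        · rcases hpm a j with h | h <;> simp [h]
        · rw [← heq]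
          rcases hpm a j with h | h <;> simp [h]
    rw [himg]
    exact Finset.card_image_of_injective _ (fun a b h => congrArg Prod.fst h)
  -- the agreeing-rows set has 2n elements
  have hagree : ∀ j j' : Fin (4 * n), j ≠ j' →
      (univ.filter (fun i : Fin (4 * n) => H i j = H i j')).card = 2 * n := by
    intro j j' hjj
    have hf : ∀ i : Fin (4 * n), H i j * H i j' = 1 ∨ H i j * H i j' = -1 := by
      intro i
      rcases hpm i j with h | h <;> rcases hpm i j' with h' | h' <;> simp [h, h']
    have := (pm_half_card univ (fun i => H i j * H i j') hf (col_orth hm H hHad' hjj)).1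
    have heq : univ.filter (fun i : Fin (4 * n) => H i j * H i j' = 1)
        = univ.filter (fun i : Fin (4 * n) => H i j = H i j') := by
      ext i
      simp only [mem_filter, mem_univ, true_and]
      rcases hpm i j with h | h <;> rcases hpm i j' with h' | h' <;>
        simp [h, h']
    rw [heq] at this
    simp only [Finset.card_univ, Fintype.card_fin] at this
    omega
  -- agreeing pairs (rows 0 and 1 both agree)
  have hsame : ∀ j j' : Fin (4 * n), j ≠ j' → H r1 j = H r1 j' →
      (univ.filter (fun i : Fin (4 * n) => i ≠ r0 ∧ i ≠ r1 ∧ H i j = H i j')).card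
        = 2 * n - 2 := by
    intro j j' hjj h1
    have hset : univ.filter (fun i : Fin (4 * n) => i ≠ r0 ∧ i ≠ r1 ∧ H i j = H i j')
        = (univ.filter (fun i : Fin (4 * n) => H i j = H i j')) \ {r0, r1} := by
      ext i
      simp only [mem_filter, mem_univ, true_and, mem_sdiff, mem_insert, mem_singleton, not_or]
      tauto
    have hsub : ({r0, r1} : Finset (Fin (4 * n))) ⊆
        univ.filter (fun i : Fin (4 * n) => H i j = H i j') := by
      intro i hi
      simp only [mem_insert, mem_singleton] at hi
      rcases hi with rfl | rfl
      · simp only [mem_filter, mem_univ, true_and]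
        rw [hrow0 j, hrow0 j']
      · simp only [mem_filter, mem_univ, true_and]
        exact h1
    rw [hset, Finset.card_sdiff_of_subset hsub, Finset.card_pair h01, hagree j j' hjj]
  -- components 5 and 6 are applications
  refine ⟨hcard1, hcard2, hblocks, hblockcard, ?_, ?_, ?_⟩
  · intro j j' hj hj' hjj
    rw [hpairred j j', hsame j j' hjj (by rw [hj, hj'])]
  · intro j j' hj hj' hjj
    rw [hpairred j j', hsame j j' hjj (by rw [hj, hj'])]
  · -- mixed pair
    intro j j' hj hj'
    have hjj : j ≠ j' := by
      intro h
      rw [h, hj'] at hj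
      norm_num at hj
    rw [hpairred j j']
    have hset : univ.filter (fun i : Fin (4 * n) => i ≠ r0 ∧ i ≠ r1 ∧ H i j = H i j')
        = (univ.filter (fun i : Fin (4 * n) => H i j = H i j')) \ {r0} := by
      ext i
      simp only [mem_filter, mem_univ, true_and, mem_sdiff, mem_singleton]
      constructor
      · rintro ⟨h0, h1, h2⟩; exact ⟨h2, h0⟩
      · rintro ⟨h2, h0⟩
        refine ⟨h0, ?_, h2⟩
        rintro rfl
        rw [hj, hj'] at h2
        norm_num at h2
    have hsub : ({r0} : Finset (Fin (4 * n))) ⊆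
        univ.filter (fun i : Fin (4 * n) => H i j = H i j') := by
      intro i hi
      simp only [mem_singleton] at hi
      subst hi
      simp only [mem_filter, mem_univ, true_and]
      rw [hrow0 j, hrow0 j']
    rw [hset, Finset.card_sdiff_of_subset hsub, Finset.card_singleton, hagree j j' hjj]
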